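/- Let μ, μ̃ ∈ ℝ^d, let Σ ∈ ℝ^{d×d} be symmetric positive definite, and let B be any invertible matrix with BBᵀ = Σ. Then the total variation distance between the Gaussian measures N(μ, Σ) and N(μ̃, Σ) equals 2Φ(|B^{-1}(μ̃ - μ)|/2) - 1, where Φ is the standard normal CDF and |·| is the Euclidean norm. -/

import Mathlib

open MeasureTheory Matrix

noncomputable def tvDist {X : Type*} [MeasurableSpace X] (ν ν' : Measure X) : ℝ :=
  ⨆ A : {s : Set X // MeasurableSet s}, |(ν A.1).toReal - (ν' A.1).toReal|

noncomputable def gaussianMeasure {d : ℕ} (μ : EuclideanSpace ℝ (Fin d))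
    (S : Matrix (Fin d) (Fin d) ℝ) : Measure (EuclideanSpace ℝ (Fin d)) :=
  volume.withDensity fun z =>
    ENNReal.ofReal (((2 * Real.pi) ^ d * S.det) ^ (-(1 : ℝ) / 2) *
      Real.exp (-(1 / 2) *
        dotProduct (S⁻¹.mulVec fun i => z i - μ i) fun i => z i - μ i))

noncomputable def stdGaussCDF (x : ℝ) : ℝ :=
  ∫ y in Set.Iic x, (Real.sqrt (2 * Real.pi))⁻¹ * Real.exp (-y ^ 2 / 2)

namespace TVAux

noncomputable def phi (x : ℝ) : ℝ := (Real.sqrt (2 * Real.pi))⁻¹ * Real.exp (-x ^ 2 / 2)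

lemma phi_nonneg (x : ℝ) : 0 ≤ phi x := by
  unfold phi; positivity

lemma phi_continuous : Continuous phi := by
  unfold phi; continuity

lemma phi_integrable : Integrable phi := by
  unfold phi
  have h : Integrable (fun x : ℝ => Real.exp (-(1/2) * x ^ 2)) := integrable_exp_neg_mul_sq (by norm_num)
  have : (fun x : ℝ => (Real.sqrt (2 * Real.pi))⁻¹ * Real.exp (-x ^ 2 / 2))
      = fun x => (Real.sqrt (2 * Real.pi))⁻¹ * Real.exp (-(1/2) * x ^ 2) := by
    funext x; ring_nf
  rw [this]
  exact h.const_mul _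

lemma phi_integral : ∫ x, phi x = 1 := by
  unfold phi
  have h : (fun x : ℝ => (Real.sqrt (2 * Real.pi))⁻¹ * Real.exp (-x ^ 2 / 2))
      = fun x => (Real.sqrt (2 * Real.pi))⁻¹ * Real.exp (-(1/2) * x ^ 2) := by
    funext x; ring_nf
  rw [h, integral_const_mul, integral_gaussian]
  have h2 : (0:ℝ) < 2 * Real.pi := by positivity
  rw [show Real.pi / (1/2) = 2 * Real.pi by ring]
  rw [inv_mul_cancel₀ (Real.sqrt_ne_zero'.mpr h2)]

lemma stdGaussCDF_eq (x : ℝ) : stdGaussCDF x = ∫ y in Set.Iic x, phi y := rfl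

lemma stdGaussCDF_nonneg (x : ℝ) : 0 ≤ stdGaussCDF x := by
  rw [stdGaussCDF_eq]
  exact setIntegral_nonneg measurableSet_Iic fun y _ => phi_nonneg y

lemma phi_neg (x : ℝ) : phi (-x) = phi x := by unfold phi; ring_nf

lemma stdGaussCDF_neg (x : ℝ) : stdGaussCDF (-x) = 1 - stdGaussCDF x := by
  rw [stdGaussCDF_eq, stdGaussCDF_eq]
  have h1 : ∫ y in Set.Iic (-x), phi y = ∫ y in Set.Ioi x, phi y := by
    have := integral_comp_neg_Iic (c := -x) phi
    rw [neg_neg] at this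
    rw [← this]
    simp_rw [phi_neg]
  have h2 : (∫ y in Set.Iic x, phi y) + ∫ y in Set.Ioi x, phi y = 1 := by
    rw [← Set.compl_Iic, integral_add_compl measurableSet_Iic phi_integrable, phi_integral]
  linarith

/-- mass of a coordinate halfspace under the product std gaussian density -/
lemma halfspace_lintegral {d : ℕ} (i₀ : Fin d) (a : ℝ) :
    ∫⁻ y in {y : Fin d → ℝ | y i₀ ≤ a}, ENNReal.ofReal (∏ i, phi (y i)) ∂volume
      = ENNReal.ofReal (stdGaussCDF a) := by
  classical
  set f : Fin d → ℝ → ℝ := fun i => if i = i₀ then Set.indicator (Set.Iic a) phi else phi with hf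
  have hfi : ∀ i, Integrable (f i) := by
    intro i
    by_cases h : i = i₀ <;> simp only [hf, h, if_true, if_false, reduceIte]
    · exact phi_integrable.indicator measurableSet_Iic
    · exact phi_integrable
  have hfnn : ∀ i x, 0 ≤ f i x := by
    intro i x
    by_cases h : i = i₀ <;> simp only [hf, h, if_true, if_false, reduceIte]
    · exact Set.indicator_nonneg (fun y _ => phi_nonneg y) x
    · exact phi_nonneg x
  have hint : Integrable (fun y : Fin d → ℝ => ∏ i, f i (y i)) := Integrable.fintype_prod hfi
  have hval : ∫ y : Fin d → ℝ, ∏ i, f i (y i) = stdGaussCDF a := by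
    rw [MeasureTheory.integral_fintype_prod_volume_eq_prod f]
    rw [Finset.prod_eq_single i₀]
    · simp only [hf, if_true, reduceIte]
      rw [integral_indicator measurableSet_Iic, stdGaussCDF_eq]
    · intro i _ hi
      simp only [hf, hi, if_false, reduceIte, phi_integral]
    · simp
  have hpt : ∀ y : Fin d → ℝ, ENNReal.ofReal (∏ i, f i (y i))
      = Set.indicator {y : Fin d → ℝ | y i₀ ≤ a}
          (fun y => ENNReal.ofReal (∏ i, phi (y i))) y := by
    intro y
    by_cases h : y i₀ ≤ a
    · rw [Set.indicator_of_mem (show y ∈ {y : Fin d → ℝ | y i₀ ≤ a} from h)]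
      congr 1
      refine Finset.prod_congr rfl fun i _ => ?_
      by_cases hi : i = i₀
      · subst hi; simp only [hf, if_true, reduceIte, Set.indicator_of_mem (Set.mem_Iic.mpr h)]
      · simp only [hf, hi, if_false, reduceIte]
    · rw [Set.indicator_of_notMem (show y ∉ {y : Fin d → ℝ | y i₀ ≤ a} from h)]
      rw [Finset.prod_eq_zero (Finset.mem_univ i₀)]
      · simp
      · simp only [hf, if_true, reduceIte]
        exact Set.indicator_of_notMem (show y i₀ ∉ Set.Iic a from h) _
  have hset : MeasurableSet {y : Fin d → ℝ | y i₀ ≤ a} :=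
    measurableSet_le (measurable_pi_apply i₀) measurable_const
  rw [← lintegral_indicator hset (fun y => ENNReal.ofReal (∏ i, phi (y i)))]
  rw [show (fun y => Set.indicator {y : Fin d → ℝ | y i₀ ≤ a}
        (fun y => ENNReal.ofReal (∏ i, phi (y i))) y)
      = fun y => ENNReal.ofReal (∏ i, f i (y i)) from funext fun y => (hpt y).symm]
  rw [← MeasureTheory.ofReal_integral_eq_lintegral_ofReal hint
    (Filter.Eventually.of_forall fun y => Finset.prod_nonneg fun i _ => hfnn i (y i))]
  rw [hval]

lemma total_lintegral (d : ℕ) :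
    ∫⁻ y : Fin d → ℝ, ENNReal.ofReal (∏ i, phi (y i)) ∂volume = 1 := by
  have hint : Integrable (fun y : Fin d → ℝ => ∏ i, phi (y i)) :=
    Integrable.fintype_prod fun _ => phi_integrable
  rw [← MeasureTheory.ofReal_integral_eq_lintegral_ofReal hint
    (Filter.Eventually.of_forall fun y => Finset.prod_nonneg fun i _ => phi_nonneg (y i))]
  rw [MeasureTheory.integral_fintype_prod_volume_eq_prod (fun _ => phi)]
  simp [phi_integral]

/-- volume on EuclideanSpace agrees with pi volume -/
lemma vol_eq (d : ℕ) :
    (volume : Measure (EuclideanSpace ℝ (Fin d)))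
      = Measure.map (MeasurableEquiv.toLp 2 (Fin d → ℝ)) (volume : Measure (Fin d → ℝ)) :=
  (PiLp.volume_preserving_toLp (Fin d)).map_eq.symm

lemma prod_phi {d : ℕ} (x : Fin d → ℝ) :
    ∏ i, phi (x i) = (Real.sqrt (2 * Real.pi))⁻¹ ^ d * Real.exp (-(∑ i, x i ^ 2) / 2) := by
  unfold phi
  rw [Finset.prod_mul_distrib, Finset.prod_const, ← Real.exp_sum]
  simp only [Finset.card_univ, Fintype.card_fin]
  congr 1
  rw [← Finset.sum_div, ← Finset.sum_neg_distrib]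

/-- rotation-invariance: mass of a general halfspace -/
lemma halfspace_lintegral_gen {d : ℕ} (m : Fin d → ℝ) (hm : m ≠ 0) (t : ℝ) :
    ∫⁻ y in {y : Fin d → ℝ | m ⬝ᵥ y ≤ t}, ENNReal.ofReal (∏ i, phi (y i)) ∂volume
      = ENNReal.ofReal (stdGaussCDF (t / Real.sqrt (∑ i, m i ^ 2))) := by
  classical
  obtain ⟨j, hj⟩ : ∃ j, m j ≠ 0 := by
    by_contra h
    push_neg at h
    exact hm (funext h)
  set r : ℝ := Real.sqrt (∑ i, m i ^ 2) with hr
  have hrpos : 0 < r := by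
    apply Real.sqrt_pos.mpr
    have h1 : (0:ℝ) < m j ^ 2 := by positivity
    have h2 : ∀ i ∈ Finset.univ, (0:ℝ) ≤ m i ^ 2 := fun i _ => sq_nonneg _
    exact lt_of_lt_of_le h1 (Finset.single_le_sum h2 (Finset.mem_univ j))
  have hr2 : r ^ 2 = ∑ i, m i ^ 2 := Real.sq_sqrt (Finset.sum_nonneg fun i _ => sq_nonneg _)
  set n : EuclideanSpace ℝ (Fin d) := WithLp.toLp 2 (fun i => r⁻¹ * m i) with hn
  have hnorm : ‖n‖ = 1 := by
    rw [EuclideanSpace.norm_eq]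
    have : ∀ i, ‖n i‖ ^ 2 = r⁻¹ ^ 2 * m i ^ 2 := by
      intro i; rw [Real.norm_eq_abs, sq_abs, hn, PiLp.toLp_apply]; ring
    rw [Finset.sum_congr rfl fun i _ => this i, ← Finset.mul_sum, ← hr2]
    rw [show r⁻¹ ^ 2 * r ^ 2 = 1 by field_simp]
    exact Real.sqrt_one
  have horth : Orthonormal ℝ (({j} : Set (Fin d)).restrict fun _ => n) := by
    refine ⟨fun i => hnorm, ?_⟩
    intro i k hik
    exact absurd (Subsingleton.elim i k) hik
  obtain ⟨b, hb⟩ := horth.exists_orthonormalBasis_extension_of_card_eq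
    (by simp [finrank_euclideanSpace])
  have hbj : b j = n := hb j rfl
  have hrepr : ∀ y : EuclideanSpace ℝ (Fin d), b.repr y j = r⁻¹ * (m ⬝ᵥ y.ofLp) := by
    intro y
    rw [OrthonormalBasis.repr_apply_apply, hbj]
    simp only [PiLp.inner_apply, RCLike.inner_apply, conj_trivial, hn, PiLp.toLp_apply]
    rw [dotProduct, Finset.mul_sum]
    exact Finset.sum_congr rfl fun i _ => by ring
  set Φ : (Fin d → ℝ) → (Fin d → ℝ) := fun y => (b.repr (WithLp.toLp 2 y)).ofLp with hΦ
  have hset : {y : Fin d → ℝ | m ⬝ᵥ y ≤ t} = Φ ⁻¹' {w : Fin d → ℝ | w j ≤ t / r} := by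
    ext y
    simp only [Set.mem_setOf_eq, Set.mem_preimage, hΦ, hrepr]
    rw [div_eq_inv_mul]
    exact (mul_le_mul_iff_right₀ (inv_pos.mpr hrpos)).symm
  have hinv : ∀ y : EuclideanSpace ℝ (Fin d), (∏ i, phi (y i)) = ∏ i, phi (b.repr y i) := by
    intro y
    rw [prod_phi, prod_phi]
    have h1 := b.repr.norm_map y
    rw [EuclideanSpace.norm_eq, EuclideanSpace.norm_eq] at h1
    have h2 := congrArg (· ^ 2) h1
    simp only at h2
    rw [Real.sq_sqrt (Finset.sum_nonneg fun i _ => sq_nonneg _),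
      Real.sq_sqrt (Finset.sum_nonneg fun i _ => sq_nonneg _)] at h2
    simp only [Real.norm_eq_abs, sq_abs] at h2
    rw [h2]
  have hmp : MeasurePreserving Φ (volume : Measure (Fin d → ℝ)) volume :=
    (PiLp.volume_preserving_ofLp (Fin d)).comp
      (b.measurePreserving_repr.comp (PiLp.volume_preserving_toLp (Fin d)))
  have hmeasf : Measurable fun w : Fin d → ℝ => ENNReal.ofReal (∏ i, phi (w i)) := by
    apply ENNReal.measurable_ofReal.comp
    apply Finset.measurable_prod
    intro i _
    exact (phi_continuous.comp (continuous_apply i)).measurable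
  have hW : MeasurableSet {w : Fin d → ℝ | w j ≤ t / r} :=
    measurableSet_le (measurable_pi_apply j) measurable_const
  have hpre : MeasurableSet (Φ ⁻¹' {w : Fin d → ℝ | w j ≤ t / r}) :=
    hW.preimage hmp.measurable
  rw [hset]
  have e1 : ∫⁻ y in Φ ⁻¹' {w : Fin d → ℝ | w j ≤ t / r}, ENNReal.ofReal (∏ i, phi (y i))
      = ∫⁻ y in Φ ⁻¹' {w : Fin d → ℝ | w j ≤ t / r}, ENNReal.ofReal (∏ i, phi (Φ y i)) :=
    setLIntegral_congr_fun hpre fun y _ => congrArg ENNReal.ofReal (hinv (WithLp.toLp 2 y))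
  rw [e1, hmp.setLIntegral_comp_preimage hW hmeasf]
  exact halfspace_lintegral j (t / r)

/-- the TV distance formula for densities with a dominating set -/
lemma tvDist_eq {X : Type*} [MeasurableSpace X] {ρ : Measure X} {F G : X → ℝ}
    (hFm : Measurable F) (hGm : Measurable G) (hF0 : ∀ x, 0 ≤ F x) (hG0 : ∀ x, 0 ≤ G x)
    (hFi : Integrable F ρ) (hGi : Integrable G ρ) (hFG : ∫ x, F x ∂ρ = ∫ x, G x ∂ρ)
    {A : Set X} (hA : MeasurableSet A) (hge : ∀ x ∈ A, G x ≤ F x) (hle : ∀ x ∉ A, F x ≤ G x) :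
    tvDist (ρ.withDensity fun x => ENNReal.ofReal (F x))
        (ρ.withDensity fun x => ENNReal.ofReal (G x)) =
      ∫ x in A, F x ∂ρ - ∫ x in A, G x ∂ρ := by
  have key : ∀ (H : X → ℝ), Measurable H → (∀ x, 0 ≤ H x) → ∀ (s : Set X), MeasurableSet s →
      ((ρ.withDensity fun x => ENNReal.ofReal (H x)) s).toReal = ∫ x in s, H x ∂ρ := by
    intro H hHm hH0 s hs
    rw [withDensity_apply _ hs]
    rw [integral_eq_lintegral_of_nonneg_ae (Filter.Eventually.of_forall fun x => hH0 x)
      hHm.aestronglyMeasurable]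
  set D : ℝ := (∫ x in A, F x ∂ρ) - ∫ x in A, G x ∂ρ with hD
  have hFGi : Integrable (fun x => F x - G x) ρ := hFi.sub hGi
  have hGFi : Integrable (fun x => G x - F x) ρ := hGi.sub hFi
  have hDA : D = ∫ x in A, F x - G x ∂ρ := (integral_sub hFi.integrableOn hGi.integrableOn).symm
  have hDnn : 0 ≤ D := by
    rw [hDA]
    exact setIntegral_nonneg hA fun x hx => sub_nonneg.mpr (hge x hx)
  have bound : ∀ s : Set X, MeasurableSet s →
      |(∫ x in s, F x ∂ρ) - ∫ x in s, G x ∂ρ| ≤ D := by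
    intro s hs
    rw [abs_le]
    have hFmG : (∫ x in s, F x ∂ρ) - ∫ x in s, G x ∂ρ = ∫ x in s, F x - G x ∂ρ :=
      (integral_sub hFi.integrableOn hGi.integrableOn).symm
    constructor
    · -- lower bound: ∫_s (G - F) ≤ D
      rw [neg_le, neg_sub]
      have h1 : (∫ x in s, G x ∂ρ) - ∫ x in s, F x ∂ρ = ∫ x in s, G x - F x ∂ρ :=
        (integral_sub hGi.integrableOn hFi.integrableOn).symm
      have hsplit : ∫ x in s, G x - F x ∂ρ
          = (∫ x in s ∩ Aᶜ, G x - F x ∂ρ) + ∫ x in s \ Aᶜ, G x - F x ∂ρ :=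
        (integral_inter_add_diff hA.compl hGFi.integrableOn).symm
      have hneg : ∫ x in s \ Aᶜ, G x - F x ∂ρ ≤ 0 := by
        apply setIntegral_nonpos (hs.diff hA.compl)
        intro x hx
        have hxA : x ∈ A := by simpa using hx.2
        exact sub_nonpos.mpr (hge x hxA)
      have hmono : ∫ x in s ∩ Aᶜ, G x - F x ∂ρ ≤ ∫ x in Aᶜ, G x - F x ∂ρ := by
        apply setIntegral_mono_set hGFi.integrableOn
        · exact (ae_restrict_iff' hA.compl).mpr (Filter.Eventually.of_forall
            fun x hx => sub_nonneg.mpr (hle x hx))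
        · exact HasSubset.Subset.eventuallyLE Set.inter_subset_right
      have hcompl : ∫ x in Aᶜ, G x - F x ∂ρ = D := by
        have htot : (∫ x in A, G x - F x ∂ρ) + ∫ x in Aᶜ, G x - F x ∂ρ = 0 := by
          rw [integral_add_compl hA hGFi, integral_sub hGi hFi, hFG, sub_self]
        have hAneg : ∫ x in A, G x - F x ∂ρ = -D := by
          rw [hDA, ← integral_neg]
          congr 1 with x
          ring
        linarith
      linarith
    · -- upper bound: ∫_s (F - G) ≤ D
      rw [hFmG]
      have hsplit : ∫ x in s, F x - G x ∂ρ
          = (∫ x in s ∩ A, F x - G x ∂ρ) + ∫ x in s \ A, F x - G x ∂ρ :=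
        (integral_inter_add_diff hA hFGi.integrableOn).symm
      have hneg : ∫ x in s \ A, F x - G x ∂ρ ≤ 0 :=
        setIntegral_nonpos (hs.diff hA) fun x hx => sub_nonpos.mpr (hle x hx.2)
      have hmono : ∫ x in s ∩ A, F x - G x ∂ρ ≤ ∫ x in A, F x - G x ∂ρ := by
        apply setIntegral_mono_set hFGi.integrableOn
        · exact (ae_restrict_iff' hA).mpr (Filter.Eventually.of_forall
            fun x hx => sub_nonneg.mpr (hge x hx))
        · exact HasSubset.Subset.eventuallyLE Set.inter_subset_right
      rw [hDA]
      linarith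
  have hne : Nonempty {s : Set X // MeasurableSet s} := ⟨⟨∅, MeasurableSet.empty⟩⟩
  apply le_antisymm
  · apply ciSup_le
    intro A'
    rw [key F hFm hF0 A'.1 A'.2, key G hGm hG0 A'.1 A'.2]
    exact bound A'.1 A'.2
  · have hb : BddAbove (Set.range fun A' : {s : Set X // MeasurableSet s} =>
        |((ρ.withDensity fun x => ENNReal.ofReal (F x)) A'.1).toReal
          - ((ρ.withDensity fun x => ENNReal.ofReal (G x)) A'.1).toReal|) := by
      refine ⟨D, ?_⟩
      rintro x ⟨A', rfl⟩
      dsimp only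
      rw [key F hFm hF0 A'.1 A'.2, key G hGm hG0 A'.1 A'.2]
      exact bound A'.1 A'.2
    have h := le_ciSup hb (⟨A, hA⟩ : {s : Set X // MeasurableSet s})
    rw [key F hFm hF0 A hA, key G hGm hG0 A hA, abs_of_nonneg hDnn] at h
    exact h

lemma tvDist_map {X Y : Type*} [MeasurableSpace X] [MeasurableSpace Y] (e : X ≃ᵐ Y)
    (ν ν' : Measure X) : tvDist (ν.map e) (ν'.map e) = tvDist ν ν' := by
  unfold tvDist iSup
  congr 1
  ext x
  constructor
  · rintro ⟨A, rfl⟩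
    exact ⟨⟨e ⁻¹' A.1, e.measurable A.2⟩, by simp only [MeasurableEquiv.map_apply]⟩
  · rintro ⟨A, rfl⟩
    refine ⟨⟨e.symm ⁻¹' A.1, e.symm.measurable A.2⟩, ?_⟩
    simp [MeasurableEquiv.map_apply, Set.preimage_preimage]

section main
variable {d : ℕ}

/-- the real density -/
noncomputable def dens (μ : EuclideanSpace ℝ (Fin d)) (S : Matrix (Fin d) (Fin d) ℝ)
    (z : Fin d → ℝ) : ℝ :=
  ((2 * Real.pi) ^ d * S.det) ^ (-(1 : ℝ) / 2) *
    Real.exp (-(1 / 2) * dotProduct (S⁻¹.mulVec fun i => z i - μ i) fun i => z i - μ i)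

lemma gaussianMeasure_eq (μ : EuclideanSpace ℝ (Fin d)) (S : Matrix (Fin d) (Fin d) ℝ) :
    gaussianMeasure μ S
      = Measure.map (MeasurableEquiv.toLp 2 (Fin d → ℝ))
          ((volume : Measure (Fin d → ℝ)).withDensity fun z => ENNReal.ofReal (dens μ S z)) := by
  ext s hs
  rw [gaussianMeasure, MeasurableEquiv.map_apply, withDensity_apply _ hs,
    withDensity_apply _ ((MeasurableEquiv.toLp 2 (Fin d → ℝ)).measurable hs)]
  exact ((PiLp.volume_preserving_toLp (Fin d)).setLIntegral_comp_preimage_emb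
    (MeasurableEquiv.toLp 2 (Fin d → ℝ)).measurableEmbedding
    (fun z : EuclideanSpace ℝ (Fin d) => ENNReal.ofReal (dens μ S z.ofLp)) s).symm

lemma mulVec_continuous (M : Matrix (Fin d) (Fin d) ℝ) :
    Continuous fun v : Fin d → ℝ => M.mulVec v := by
  have h := LinearMap.continuous_on_pi (Matrix.toLin' M)
  have : (fun v : Fin d → ℝ => M.mulVec v) = ⇑(Matrix.toLin' M) := by
    funext v; rw [Matrix.toLin'_apply]
  rw [this]; exact h

lemma dens_continuous (μ : EuclideanSpace ℝ (Fin d)) (S : Matrix (Fin d) (Fin d) ℝ) :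
    Continuous (dens μ S) := by
  unfold dens
  have hw : Continuous fun z : Fin d → ℝ => (fun i => z i - μ i : Fin d → ℝ) :=
    continuous_pi fun i => (continuous_apply i).sub continuous_const
  have hmv := (mulVec_continuous S⁻¹).comp hw
  have hdot : Continuous fun z : Fin d → ℝ =>
      dotProduct (S⁻¹.mulVec fun i => z i - μ i) (fun i => z i - μ i) := by
    simp only [dotProduct]
    apply continuous_finset_sum
    intro i _
    exact ((continuous_apply i).comp hmv).mul ((continuous_apply i).comp hw)
  exact continuous_const.mul (Real.continuous_exp.comp (continuous_const.mul hdot))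

lemma dens_measurable (μ : EuclideanSpace ℝ (Fin d)) (S : Matrix (Fin d) (Fin d) ℝ) :
    Measurable (dens μ S) := (dens_continuous μ S).measurable

lemma dens_nonneg (μ : EuclideanSpace ℝ (Fin d)) {S : Matrix (Fin d) (Fin d) ℝ}
    (hS : S.PosDef) (z : Fin d → ℝ) : 0 ≤ dens μ S z := by
  unfold dens
  have h1 : (0:ℝ) < (2 * Real.pi) ^ d * S.det := by
    have := hS.det_pos
    positivity
  have h2 : (0:ℝ) < ((2 * Real.pi) ^ d * S.det) ^ (-(1 : ℝ) / 2) := Real.rpow_pos_of_pos h1 _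
  positivity

/-- pointwise identity between the density and the pulled-back standard density -/
lemma dens_eq {μ : EuclideanSpace ℝ (Fin d)} {S B : Matrix (Fin d) (Fin d) ℝ}
    (hS : S.PosDef) (hB : IsUnit B.det) (hBS : B * Bᵀ = S) (z : Fin d → ℝ) :
    dens μ S z = |B.det|⁻¹ * ∏ i, phi (B⁻¹.mulVec (fun i => z i - μ i) i) := by
  have h2pi : (0:ℝ) < 2 * Real.pi := by positivity
  have habs : (0:ℝ) ≤ |B.det| := abs_nonneg _
  have hSinv : S⁻¹ = (B⁻¹)ᵀ * B⁻¹ := by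
    rw [← hBS, Matrix.mul_inv_rev, Matrix.transpose_nonsing_inv]
  have hquad : dotProduct (S⁻¹.mulVec fun i => z i - μ i) (fun i => z i - μ i)
      = ∑ i, B⁻¹.mulVec (fun i => z i - μ i) i ^ 2 := by
    rw [hSinv, ← Matrix.mulVec_mulVec, Matrix.mulVec_transpose, ← Matrix.dotProduct_mulVec]
    rw [dotProduct]
    exact Finset.sum_congr rfl fun i _ => (sq _).symm
  have hdet : S.det = B.det ^ 2 := by
    rw [← hBS, Matrix.det_mul, Matrix.det_transpose, sq]
  have e1 : ((2 * Real.pi) ^ d : ℝ) ^ (-(1 : ℝ) / 2) = (Real.sqrt (2 * Real.pi))⁻¹ ^ d := by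
    calc ((2 * Real.pi) ^ d : ℝ) ^ (-(1 : ℝ) / 2)
        = ((2 * Real.pi) ^ ((d : ℝ))) ^ (-(1 : ℝ) / 2) := by rw [Real.rpow_natCast]
      _ = (2 * Real.pi) ^ ((d : ℝ) * (-(1 : ℝ) / 2)) := (Real.rpow_mul h2pi.le _ _).symm
      _ = (2 * Real.pi) ^ ((-(1 : ℝ) / 2) * (d : ℝ)) := by congr 1; ring
      _ = ((2 * Real.pi) ^ (-(1 : ℝ) / 2)) ^ ((d : ℝ)) := Real.rpow_mul h2pi.le _ _
      _ = ((2 * Real.pi) ^ (-(1 : ℝ) / 2)) ^ d := by rw [Real.rpow_natCast]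
      _ = (Real.sqrt (2 * Real.pi))⁻¹ ^ d := by
          rw [show (-(1 : ℝ) / 2) = -(1/2 : ℝ) by ring, Real.rpow_neg h2pi.le,
            ← Real.sqrt_eq_rpow]
  have e2 : (S.det : ℝ) ^ (-(1 : ℝ) / 2) = |B.det|⁻¹ := by
    rw [hdet, ← sq_abs, ← Real.rpow_natCast |B.det| 2, ← Real.rpow_mul habs,
      show ((2 : ℕ) : ℝ) * (-(1 : ℝ) / 2) = -1 by norm_num, Real.rpow_neg_one]
  have hC : ((2 * Real.pi) ^ d * S.det) ^ (-(1 : ℝ) / 2)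
      = |B.det|⁻¹ * (Real.sqrt (2 * Real.pi))⁻¹ ^ d := by
    rw [Real.mul_rpow (by positivity) hS.det_pos.le, e1, e2, mul_comm]
  unfold dens
  rw [hquad, hC, prod_phi]
  rw [show -(1/2 : ℝ) * (∑ i, B⁻¹.mulVec (fun i => z i - μ i) i ^ 2)
    = -(∑ i, B⁻¹.mulVec (fun i => z i - μ i) i ^ 2) / 2 by ring]
  ring

/-- change of variables: the mass of a set -/
lemma mass_eq {μ : EuclideanSpace ℝ (Fin d)} {S B : Matrix (Fin d) (Fin d) ℝ}
    (hS : S.PosDef) (hB : IsUnit B.det) (hBS : B * Bᵀ = S)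
    {A : Set (Fin d → ℝ)} (hA : MeasurableSet A) :
    (volume : Measure (Fin d → ℝ)).withDensity (fun z => ENNReal.ofReal (dens μ S z)) A
      = ∫⁻ y in (fun y : Fin d → ℝ => (fun i => μ i + B.mulVec y i)) ⁻¹' A,
          ENNReal.ofReal (∏ i, phi (y i)) ∂volume := by
  classical
  have hdB : B.det ≠ 0 := hB.ne_zero
  set g : (Fin d → ℝ) → (Fin d → ℝ) := fun y => (fun i => μ i + B.mulVec y i) with hg
  have hgcomp : g = (fun x : Fin d → ℝ => (fun i => μ i : Fin d → ℝ) + x) ∘ B.mulVec := rfl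
  have hmeas_mul : Measurable (B.mulVec : (Fin d → ℝ) → (Fin d → ℝ)) :=
    (mulVec_continuous B).measurable
  have hmeas_add : Measurable fun x : Fin d → ℝ => (fun i => μ i : Fin d → ℝ) + x :=
    measurable_const.add measurable_id
  have hmeas_g : Measurable g := by rw [hgcomp]; exact hmeas_add.comp hmeas_mul
  -- the pushforward of volume by g
  have hmapB : Measure.map (B.mulVec : (Fin d → ℝ) → (Fin d → ℝ)) volume
      = ENNReal.ofReal |B.det⁻¹| • volume := by
    have h := Real.map_matrix_volume_pi_eq_smul_volume_pi (M := B) hdB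
    have hcoe : ⇑(Matrix.toLin' B) = (B.mulVec : (Fin d → ℝ) → (Fin d → ℝ)) := by
      funext v; rw [Matrix.toLin'_apply]
    rw [hcoe] at h
    exact h
  have hmapg : Measure.map g volume = ENNReal.ofReal |B.det|⁻¹ • volume := by
    rw [hgcomp, ← Measure.map_map hmeas_add hmeas_mul, hmapB, Measure.map_smul,
      (measurePreserving_add_left volume _).map_eq, abs_inv]
  have hvol : (volume : Measure (Fin d → ℝ))
      = ENNReal.ofReal |B.det| • Measure.map g volume := by
    rw [hmapg, smul_smul, ← ENNReal.ofReal_mul (abs_nonneg B.det)]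
    · rw [mul_inv_cancel₀ (abs_ne_zero.mpr hdB), ENNReal.ofReal_one, one_smul]
  -- the density transported
  have hdens : ∀ y, dens μ S (g y) = |B.det|⁻¹ * ∏ i, phi (y i) := by
    intro y
    rw [dens_eq hS hB hBS]
    congr 2
    have : (fun i => g y i - μ i) = B.mulVec y := by
      funext i; simp [hg]
    rw [this, Matrix.mulVec_mulVec, Matrix.nonsing_inv_mul B hB, Matrix.one_mulVec]
  have hmeas_prod : Measurable fun y : Fin d → ℝ => ENNReal.ofReal (∏ i, phi (y i)) := by
    apply ENNReal.measurable_ofReal.comp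
    apply Finset.measurable_prod
    intro i _
    exact (phi_continuous.comp (continuous_apply i)).measurable
  rw [withDensity_apply _ hA]
  calc ∫⁻ z in A, ENNReal.ofReal (dens μ S z) ∂volume
      = ∫⁻ z in A, ENNReal.ofReal (dens μ S z)
          ∂(ENNReal.ofReal |B.det| • Measure.map g volume) := by rw [← hvol]
    _ = ENNReal.ofReal |B.det| * ∫⁻ z in A, ENNReal.ofReal (dens μ S z)
          ∂(Measure.map g volume) := by
        rw [Measure.restrict_smul, lintegral_smul_measure, smul_eq_mul]
    _ = ENNReal.ofReal |B.det| * ∫⁻ y in g ⁻¹' A, ENNReal.ofReal (dens μ S (g y)) ∂volume := by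
        rw [setLIntegral_map hA ((dens_measurable μ S).ennreal_ofReal) hmeas_g]
    _ = ENNReal.ofReal |B.det| * ∫⁻ y in g ⁻¹' A,
          ENNReal.ofReal |B.det|⁻¹ * ENNReal.ofReal (∏ i, phi (y i)) ∂volume := by
        congr 1
        refine lintegral_congr fun y => ?_
        rw [hdens y, ENNReal.ofReal_mul (by positivity)]
    _ = ENNReal.ofReal |B.det| * (ENNReal.ofReal |B.det|⁻¹
          * ∫⁻ y in g ⁻¹' A, ENNReal.ofReal (∏ i, phi (y i)) ∂volume) := by
        rw [lintegral_const_mul _ hmeas_prod]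
    _ = ∫⁻ y in g ⁻¹' A, ENNReal.ofReal (∏ i, phi (y i)) ∂volume := by
        rw [← mul_assoc, ← ENNReal.ofReal_mul (abs_nonneg B.det),
          mul_inv_cancel₀ (abs_ne_zero.mpr hdB), ENNReal.ofReal_one, one_mul]

end main



end TVAux

lemma transp_dot {d : ℕ} (A : Matrix (Fin d) (Fin d) ℝ) (x z : Fin d → ℝ) :
    (Aᵀ *ᵥ x) ⬝ᵥ z = x ⬝ᵥ (A *ᵥ z) := by
  rw [Matrix.mulVec_transpose, ← Matrix.dotProduct_mulVec]

lemma quad_expand {d : ℕ} {M : Matrix (Fin d) (Fin d) ℝ} (hMs : Mᵀ = M) (w v : Fin d → ℝ) :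
    (M *ᵥ (w - v)) ⬝ᵥ (w - v)
      = (M *ᵥ w) ⬝ᵥ w - 2 * ((M *ᵥ v) ⬝ᵥ w) + (M *ᵥ v) ⬝ᵥ v := by
  have hswap : (M *ᵥ w) ⬝ᵥ v = (M *ᵥ v) ⬝ᵥ w := by
    conv_lhs => rw [← hMs]
    rw [transp_dot, dotProduct_comm]
  rw [Matrix.mulVec_sub, sub_dotProduct, dotProduct_sub, dotProduct_sub,
    hswap]
  ring

open TVAux in
theorem tv_distance_gaussians {d : ℕ} (μ μt : EuclideanSpace ℝ (Fin d))
    (S B : Matrix (Fin d) (Fin d) ℝ) (hS : S.PosDef) (hB : IsUnit B.det)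
    (hBS : B * Bᵀ = S) :
    tvDist (gaussianMeasure μ S) (gaussianMeasure μt S) =
      2 * stdGaussCDF
        (Real.sqrt (∑ i, (B⁻¹.mulVec (fun i => μt i - μ i) i) ^ 2) / 2) - 1 := by
  classical
  have hdB : B.det ≠ 0 := hB.ne_zero
  set v : Fin d → ℝ := fun i => μt i - μ i with hv
  set m : Fin d → ℝ := B⁻¹ *ᵥ v with hm
  by_cases hm0 : m = 0
  · -- degenerate case: μt = μ
    have hv0 : v = 0 := by
      have : B *ᵥ m = v := by
        rw [hm, Matrix.mulVec_mulVec, Matrix.mul_nonsing_inv B hB, Matrix.one_mulVec]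
      rw [hm0, Matrix.mulVec_zero] at this
      exact this.symm
    have hμ : μt = μ := by
      ext i
      have := congrFun hv0 i
      simp only [hv, Pi.zero_apply] at this
      linarith
    rw [hμ]
    have hl : tvDist (gaussianMeasure μ S) (gaussianMeasure μ S) = 0 := by
      have : ∀ A : {s : Set (EuclideanSpace ℝ (Fin d)) // MeasurableSet s},
          |((gaussianMeasure μ S) A.1).toReal - ((gaussianMeasure μ S) A.1).toReal| = 0 := by
        intro A; rw [sub_self, abs_zero]
      unfold tvDist
      rw [funext this]
      exact ciSup_const
    rw [hl, hm0]
    simp only [Pi.zero_apply, ne_eq, OfNat.ofNat_ne_zero, not_false_eq_true, zero_pow,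
      Finset.sum_const_zero, Real.sqrt_zero, zero_div]
    have hsym := stdGaussCDF_neg 0
    rw [neg_zero] at hsym
    linarith
  · -- main case
    set u : Fin d → ℝ := S⁻¹ *ᵥ v with hu
    set c : ℝ := (u ⬝ᵥ v) / 2 with hc
    set Astar : Set (Fin d → ℝ) := {z | (u ⬝ᵥ fun i => z i - μ i) ≤ c} with hAstar
    have hSinv : S⁻¹ = (B⁻¹)ᵀ * B⁻¹ := by
      rw [← hBS, Matrix.mul_inv_rev, Matrix.transpose_nonsing_inv]
    have hsymm : (S⁻¹)ᵀ = S⁻¹ := by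
      rw [hSinv, Matrix.transpose_mul, Matrix.transpose_transpose]
    -- measurability of Astar
    have hcont : Continuous fun z : Fin d → ℝ => (u ⬝ᵥ fun i => z i - μ i) := by
      simp only [dotProduct]
      apply continuous_finset_sum
      intro i _
      exact continuous_const.mul ((continuous_apply i).sub continuous_const)
    have hAmeas : MeasurableSet Astar :=
      measurableSet_le hcont.measurable measurable_const
    -- quadratic expansion
    have hwt : ∀ z : Fin d → ℝ, (fun i => z i - μt i) = (fun i => z i - μ i) - v := by
      intro z; funext i; simp only [Pi.sub_apply, hv]; ring
    have hquad : ∀ z : Fin d → ℝ,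
        ((S⁻¹ *ᵥ fun i => z i - μt i) ⬝ᵥ fun i => z i - μt i)
          = ((S⁻¹ *ᵥ fun i => z i - μ i) ⬝ᵥ fun i => z i - μ i)
            - 2 * (u ⬝ᵥ fun i => z i - μ i) + u ⬝ᵥ v := by
      intro z
      rw [hwt z, quad_expand hsymm]
    -- pointwise density comparison
    have hCpos : (0:ℝ) < ((2 * Real.pi) ^ d * S.det) ^ (-(1 : ℝ) / 2) :=
      Real.rpow_pos_of_pos (by have := hS.det_pos; positivity) _
    have hcompare : ∀ z : Fin d → ℝ,
        (dens μt S z ≤ dens μ S z ↔ (u ⬝ᵥ fun i => z i - μ i) ≤ c) := by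
      intro z
      unfold dens
      rw [mul_le_mul_iff_right₀ hCpos, Real.exp_le_exp, hquad z, hc]
      constructor <;> intro h <;> linarith
    have hcompare2 : ∀ z : Fin d → ℝ,
        (dens μ S z ≤ dens μt S z ↔ c ≤ (u ⬝ᵥ fun i => z i - μ i)) := by
      intro z
      unfold dens
      rw [mul_le_mul_iff_right₀ hCpos, Real.exp_le_exp, hquad z, hc]
      constructor <;> intro h <;> linarith
    -- total masses
    have htotal : ∀ μ₀ : EuclideanSpace ℝ (Fin d),
        ∫⁻ z, ENNReal.ofReal (dens μ₀ S z) ∂(volume : Measure (Fin d → ℝ)) = 1 := by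
      intro μ₀
      have h := mass_eq (μ := μ₀) hS hB hBS MeasurableSet.univ
      rw [withDensity_apply _ MeasurableSet.univ, Measure.restrict_univ, Set.preimage_univ,
        Measure.restrict_univ] at h
      rw [h, total_lintegral]
    have hint : ∀ μ₀ : EuclideanSpace ℝ (Fin d),
        Integrable (dens μ₀ S) (volume : Measure (Fin d → ℝ)) := by
      intro μ₀
      refine ⟨(dens_measurable μ₀ S).aestronglyMeasurable, ?_⟩
      rw [hasFiniteIntegral_iff_ofReal (Filter.Eventually.of_forall fun z => dens_nonneg μ₀ hS z)]
      rw [htotal μ₀]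
      exact ENNReal.one_lt_top
    have hintegral : ∀ μ₀ : EuclideanSpace ℝ (Fin d),
        ∫ z, dens μ₀ S z ∂(volume : Measure (Fin d → ℝ)) = 1 := by
      intro μ₀
      rw [integral_eq_lintegral_of_nonneg_ae
        (Filter.Eventually.of_forall fun z => dens_nonneg μ₀ hS z)
        (dens_measurable μ₀ S).aestronglyMeasurable, htotal μ₀]
      rfl
    -- key algebra: dot products through B
    have hud : ∀ x : Fin d → ℝ, u ⬝ᵥ (B *ᵥ x) = m ⬝ᵥ x := by
      intro x
      rw [hu, hSinv, ← Matrix.mulVec_mulVec, transp_dot, Matrix.mulVec_mulVec,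
        Matrix.nonsing_inv_mul B hB, Matrix.one_mulVec, ← hm]
    have huv : u ⬝ᵥ v = m ⬝ᵥ m := by
      rw [hu, hSinv, ← Matrix.mulVec_mulVec, transp_dot, ← hm]
    have hmm : m ⬝ᵥ m = ∑ i, m i ^ 2 := by
      rw [dotProduct]
      exact Finset.sum_congr rfl fun i _ => (sq _).symm
    set r : ℝ := Real.sqrt (∑ i, m i ^ 2) with hrdef
    have hrpos : 0 < r := by
      obtain ⟨j, hj⟩ : ∃ j, m j ≠ 0 := by
        by_contra h
        push_neg at h
        exact hm0 (funext h)
      apply Real.sqrt_pos.mpr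
      have h1 : (0:ℝ) < m j ^ 2 := by positivity
      exact lt_of_lt_of_le h1 (Finset.single_le_sum (fun i _ => sq_nonneg (m i))
        (Finset.mem_univ j))
    have hr2 : r ^ 2 = ∑ i, m i ^ 2 :=
      Real.sq_sqrt (Finset.sum_nonneg fun i _ => sq_nonneg _)
    have hceq : c = r ^ 2 / 2 := by rw [hc, huv, hmm, hr2]
    -- preimage sets
    have hpre1 : (fun y : Fin d → ℝ => (fun i => μ i + B.mulVec y i)) ⁻¹' Astar
        = {y : Fin d → ℝ | m ⬝ᵥ y ≤ c} := by
      ext y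
      simp only [Set.mem_preimage, hAstar, Set.mem_setOf_eq]
      have hw : (fun i => (μ i + B.mulVec y i) - μ i) = B *ᵥ y := by
        funext i; simp
      rw [hw, hud y]
    have hpre2 : (fun y : Fin d → ℝ => (fun i => μt i + B.mulVec y i)) ⁻¹' Astar
        = {y : Fin d → ℝ | m ⬝ᵥ y ≤ c - m ⬝ᵥ m} := by
      ext y
      simp only [Set.mem_preimage, hAstar, Set.mem_setOf_eq]
      have hw : (fun i => (μt i + B.mulVec y i) - μ i) = B *ᵥ y + v := by
        funext i; simp only [Pi.add_apply, hv]; ring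
      rw [hw, dotProduct_add, hud y, huv]
      constructor <;> intro h <;> linarith
    -- the two masses
    have hmass1 : (volume : Measure (Fin d → ℝ)).withDensity
        (fun z => ENNReal.ofReal (dens μ S z)) Astar = ENNReal.ofReal (stdGaussCDF (r / 2)) := by
      rw [mass_eq hS hB hBS hAmeas, hpre1, halfspace_lintegral_gen m hm0 c]
      have harg : c / r = r / 2 := by
        rw [hceq, sq]
        field_simp
      rw [← hrdef, harg]
    have hmass2 : (volume : Measure (Fin d → ℝ)).withDensity
        (fun z => ENNReal.ofReal (dens μt S z)) Astar
          = ENNReal.ofReal (stdGaussCDF (-(r / 2))) := by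
      rw [mass_eq hS hB hBS hAmeas, hpre2, halfspace_lintegral_gen m hm0 (c - m ⬝ᵥ m)]
      have harg : (c - m ⬝ᵥ m) / r = -(r / 2) := by
        rw [hceq, hmm, ← hr2, sq]
        field_simp
        ring
      rw [← hrdef, harg]
    -- set integrals equal masses
    have hsi : ∀ μ₀ : EuclideanSpace ℝ (Fin d),
        ∫ z in Astar, dens μ₀ S z ∂(volume : Measure (Fin d → ℝ))
          = ((volume : Measure (Fin d → ℝ)).withDensity
              (fun z => ENNReal.ofReal (dens μ₀ S z)) Astar).toReal := by
      intro μ₀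
      rw [withDensity_apply _ hAmeas, integral_eq_lintegral_of_nonneg_ae
        (Filter.Eventually.of_forall fun z => dens_nonneg μ₀ hS z)
        (dens_measurable μ₀ S).aestronglyMeasurable]
    -- assemble
    rw [gaussianMeasure_eq μ S, gaussianMeasure_eq μt S, tvDist_map]
    have htv := tvDist_eq (dens_measurable μ S) (dens_measurable μt S)
      (dens_nonneg μ hS) (dens_nonneg μt hS) (hint μ) (hint μt)
      (by rw [hintegral μ, hintegral μt]) hAmeas
      (fun z hz => (hcompare z).mpr hz)
      (fun z hz => (hcompare2 z).mpr (le_of_lt (lt_of_not_ge hz)))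
    rw [htv, hsi μ, hsi μt, hmass1, hmass2,
      ENNReal.toReal_ofReal (stdGaussCDF_nonneg _),
      ENNReal.toReal_ofReal (stdGaussCDF_nonneg _), stdGaussCDF_neg]
    ring
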